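/- Let Λ be a non-ordinary numerical semigroup with conductor c = c(Λ), jump u = u(Λ) and ω = ω(Λ). Let σ be an integer with c ≤ σ < c + u (so σ ∈ Λ). Then σ is a right generator of Λ if and only if either σ ≢ 0 (mod ω), or σ ≡ 0 (mod ω) and σ/ω ∉ shrink(Λ). -/

import Mathlib

open Pointwise

namespace NumSgpPaper

/-- `S` is a numerical semigroup: an additive submonoid of ℕ with finite complement. -/
structure IsNumSgp (S : Set ℕ) : Prop where
  zero_mem : 0 ∈ S
  add_mem : ∀ ⦃a b : ℕ⦄, a ∈ S → b ∈ S → a + b ∈ S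
  cofinite : Sᶜ.Finite

/-- The Frobenius number: the largest gap of `S` (junk value `0` if there are no gaps). -/
noncomputable def frob (S : Set ℕ) : ℕ := sSup Sᶜ

open Classical in
/-- The conductor: one plus the largest gap, and `0` if there are no gaps (so `c(ℕ) = 0`). -/
noncomputable def conductor (S : Set ℕ) : ℕ := if Sᶜ = ∅ then 0 else frob S + 1

/-- The genus: the number of gaps. -/
noncomputable def genus (S : Set ℕ) : ℕ := Sᶜ.ncard

/-- The multiplicity: the smallest positive element. -/
noncomputable def mult (S : Set ℕ) : ℕ := sInf {n : ℕ | n ∈ S ∧ 0 < n}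

/-- The jump: the difference between the second and first positive elements. -/
noncomputable def jump (S : Set ℕ) : ℕ := sInf {n : ℕ | n ∈ S ∧ mult S < n} - mult S

/-- A minimal generator: a positive element of `S` that is not the sum of
two positive elements of `S`. -/
def IsMinGen (S : Set ℕ) (x : ℕ) : Prop :=
  0 < x ∧ x ∈ S ∧ ¬ ∃ a b : ℕ, 0 < a ∧ 0 < b ∧ a ∈ S ∧ b ∈ S ∧ a + b = x

/-- A right generator: a minimal generator larger than the Frobenius number. -/
def IsRightGen (S : Set ℕ) (x : ℕ) : Prop := IsMinGen S x ∧ frob S < x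

/-- A strong generator: a right generator `σ` such that `σ + m(S)` is a minimal
generator of `S \ {σ}`. -/
def IsStrongGen (S : Set ℕ) (σ : ℕ) : Prop :=
  IsRightGen S σ ∧ IsMinGen (S \ {σ}) (σ + mult S)

/-- `S` is ordinary when its gaps are exactly `{1, …, g(S)}`. -/
def IsOrdinary (S : Set ℕ) : Prop := Sᶜ = Set.Icc 1 (genus S)

/-- The left elements: the elements of `S` smaller than the Frobenius number. -/
def leftEls (S : Set ℕ) : Set ℕ := {x : ℕ | x ∈ S ∧ x < frob S}

/-- The gcd of a set of natural numbers. -/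
noncomputable def setGcd (A : Set ℕ) : ℕ :=
  sInf {d : ℕ | (∀ a ∈ A, d ∣ a) ∧ ∀ e : ℕ, (∀ a ∈ A, e ∣ a) → e ∣ d}

/-- `ω(S)`: the gcd of the left elements of `S`. -/
noncomputable def omega' (S : Set ℕ) : ℕ := setGcd (leftEls S)

/-- The shrinking of `S`: the additive submonoid of ℕ generated by the left
elements divided by their gcd. -/
noncomputable def shrink (S : Set ℕ) : Set ℕ :=
  (AddSubmonoid.closure ((fun x => x / omega' S) '' leftEls S) : AddSubmonoid ℕ)

/-- `T` is a descendant of `S`: a numerical semigroup contained in `S` all of whose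
missing elements lie beyond the Frobenius number of `S`. -/
def IsDescendant (S T : Set ℕ) : Prop :=
  IsNumSgp T ∧ T ⊆ S ∧ ∀ x ∈ S \ T, frob S < x

/-- The pseudo-ordinary semigroup `P_{m,u} = {0, m} ∪ {n : n ≥ m + u}`. -/
def P (m u : ℕ) : Set ℕ := {0, m} ∪ {n : ℕ | m + u ≤ n}

/-- The submonoid of ℕ generated by the interval `{a, …, b}`. -/
def intervalSgp (a b : ℕ) : Set ℕ := (AddSubmonoid.closure (Set.Icc a b) : AddSubmonoid ℕ)


/-- For `c ≤ σ < c + u`, `σ` is a right generator of the non-ordinary semigroup `Λ`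
iff either `ω ∤ σ`, or `ω ∣ σ` and `σ/ω ∉ shrink(Λ)`. -/
theorem stmt5 (Λ : Set ℕ) (h : IsNumSgp Λ) (hord : ¬ IsOrdinary Λ)
    (σ : ℕ) (h1 : conductor Λ ≤ σ) (h2 : σ < conductor Λ + jump Λ) :
    IsRightGen Λ σ ↔
      (¬ omega' Λ ∣ σ) ∨ (omega' Λ ∣ σ ∧ σ / omega' Λ ∉ shrink Λ) := by
  classical
  set F := frob Λ with hFdef
  -- the complement is nonempty
  have hcne : Λᶜ ≠ ∅ := by
    intro he
    apply hord
    unfold IsOrdinary genus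
    rw [he]
    simp
  have hfinc := h.cofinite
  have hFmem : F ∈ Λᶜ := Nat.sSup_mem (Set.nonempty_iff_ne_empty.2 hcne) hfinc.bddAbove
  have hFnot : F ∉ Λ := hFmem
  have hgap_le : ∀ x ∈ Λᶜ, x ≤ F := fun x hx => le_csSup hfinc.bddAbove hx
  have hcond : conductor Λ = F + 1 := by rw [conductor, if_neg hcne]
  have hbig : ∀ n : ℕ, F < n → n ∈ Λ := by
    intro n hn
    by_contra hnn
    exact absurd (hgap_le n hnn) (not_le.2 hn)
  -- multiplicity
  have hmne : {n : ℕ | n ∈ Λ ∧ 0 < n}.Nonempty :=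
    ⟨F + 1, hbig _ (Nat.lt_succ_self F), Nat.succ_pos F⟩
  have hmmem : mult Λ ∈ {n : ℕ | n ∈ Λ ∧ 0 < n} := Nat.sInf_mem hmne
  set m := mult Λ with hmdef
  have hmΛ : m ∈ Λ := hmmem.1
  have hm0 : 0 < m := hmmem.2
  have hmle : ∀ n, n ∈ Λ → 0 < n → m ≤ n := fun n ha hb => Nat.sInf_le ⟨ha, hb⟩
  -- non-ordinary gives m < F
  have hmF : m < F := by
    by_contra hge
    push_neg at hge
    apply hord
    have hsetc : Λᶜ = Set.Icc 1 F := by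
      ext x
      simp only [Set.mem_compl_iff, Set.mem_Icc]
      constructor
      · intro hx
        refine ⟨Nat.one_le_iff_ne_zero.2 ?_, hgap_le x hx⟩
        rintro rfl
        exact hx h.zero_mem
      · rintro ⟨hx1, hx2⟩ hx
        have h1 := hmle x hx hx1
        have hxF : x = F := le_antisymm hx2 (le_trans hge h1)
        exact hFnot (hxF ▸ hx)
    have hg : genus Λ = F := by
      unfold genus
      rw [hsetc, Set.ncard_eq_toFinset_card']
      simp
    unfold IsOrdinary
    rw [hg, hsetc]
  -- the jump is at most m
  have h2mmem : 2 * m ∈ {n : ℕ | n ∈ Λ ∧ m < n} := by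
    refine ⟨?_, by omega⟩
    rw [two_mul]
    exact h.add_mem hmΛ hmΛ
  have hs2le : sInf {n : ℕ | n ∈ Λ ∧ m < n} ≤ 2 * m := Nat.sInf_le h2mmem
  have hule : jump Λ ≤ m := by
    unfold jump
    rw [← hmdef]
    omega
  -- gcd of the left elements
  have hfinL : (leftEls Λ).Finite := (Set.finite_Iio F).subset (fun x hx => hx.2)
  set g := hfinL.toFinset.gcd id with hgdef
  have hgdvd : ∀ a ∈ leftEls Λ, g ∣ a := by
    intro a ha
    have := Finset.gcd_dvd (f := id) (hfinL.mem_toFinset.2 ha)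
    simpa using this
  have hgmax : ∀ e : ℕ, (∀ a ∈ leftEls Λ, e ∣ a) → e ∣ g := by
    intro e he
    exact Finset.dvd_gcd (fun b hb => he b (hfinL.mem_toFinset.1 hb))
  have homega : omega' Λ = g := by
    unfold omega' setGcd
    have hset : {d : ℕ | (∀ a ∈ leftEls Λ, d ∣ a) ∧ ∀ e : ℕ, (∀ a ∈ leftEls Λ, e ∣ a) → e ∣ d}
        = {g} := by
      ext d
      simp only [Set.mem_setOf_eq, Set.mem_singleton_iff]
      constructor
      · rintro ⟨hd1, hd2⟩
        exact Nat.dvd_antisymm (hgmax d hd1) (hd2 g hgdvd)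
      · rintro rfl
        exact ⟨hgdvd, hgmax⟩
    rw [hset, csInf_singleton]
  set ω := omega' Λ with hωdef
  have hωdvd : ∀ a ∈ leftEls Λ, ω ∣ a := by
    rw [homega]; exact hgdvd
  have hmleft : m ∈ leftEls Λ := ⟨hmΛ, hmF⟩
  have hω0 : 0 < ω := by
    rcases Nat.eq_zero_or_pos ω with h0 | h0
    · exfalso
      have := hωdvd m hmleft
      rw [h0] at this
      omega
    · exact h0
  -- basic facts about σ
  rw [hcond] at h1 h2
  have hσΛ : σ ∈ Λ := hbig σ (by omega)
  have hσF : F < σ := by omega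
  have hσ0 : 0 < σ := by omega
  -- reduce right-generatorness to non-decomposability
  have hiff : IsRightGen Λ σ ↔ ¬ ∃ a b : ℕ, 0 < a ∧ 0 < b ∧ a ∈ Λ ∧ b ∈ Λ ∧ a + b = σ := by
    constructor
    · rintro ⟨⟨_, _, hnd⟩, _⟩
      exact hnd
    · intro hnd
      exact ⟨⟨hσ0, hσΛ, hnd⟩, hσF⟩
  rw [hiff]
  have key : (∃ a b : ℕ, 0 < a ∧ 0 < b ∧ a ∈ Λ ∧ b ∈ Λ ∧ a + b = σ) ↔
      (ω ∣ σ ∧ σ / ω ∈ shrink Λ) := by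
    constructor
    · rintro ⟨a, b, ha0, hb0, haΛ, hbΛ, hab⟩
      -- both summands are left elements
      have haF : a < F := by
        by_contra hge
        push_neg at hge
        have haF' : a ≠ F := fun hh => hFnot (hh ▸ haΛ)
        have : F + 1 ≤ a := by omega
        have hbu : b < jump Λ := by omega
        have := hmle b hbΛ hb0
        omega
      have hbF : b < F := by
        by_contra hge
        push_neg at hge
        have hbF' : b ≠ F := fun hh => hFnot (hh ▸ hbΛ)
        have : F + 1 ≤ b := by omega
        have hau : a < jump Λ := by omega
        have := hmle a haΛ ha0
        omega
      have haL : a ∈ leftEls Λ := ⟨haΛ, haF⟩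
      have hbL : b ∈ leftEls Λ := ⟨hbΛ, hbF⟩
      obtain ⟨a', rfl⟩ := hωdvd a haL
      obtain ⟨b', rfl⟩ := hωdvd b hbL
      have hdvdσ : ω ∣ σ := ⟨a' + b', by rw [Nat.mul_add]; omega⟩
      refine ⟨hdvdσ, ?_⟩
      have hσdiv : σ / ω = a' + b' := by
        rw [← hab, ← Nat.mul_add, Nat.mul_div_cancel_left _ hω0]
      rw [hσdiv]
      show a' + b' ∈ AddSubmonoid.closure ((fun x => x / ω) '' leftEls Λ)
      have hmem : ∀ x : ℕ, ∀ x' : ℕ, x = ω * x' → x ∈ leftEls Λ →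
          x' ∈ AddSubmonoid.closure ((fun x => x / ω) '' leftEls Λ) := by
        rintro x x' rfl hx
        apply AddSubmonoid.subset_closure
        exact ⟨ω * x', hx, by simp [Nat.mul_div_cancel_left _ hω0]⟩
      exact AddSubmonoid.add_mem _ (hmem _ a' rfl haL) (hmem _ b' rfl hbL)
    · rintro ⟨hdvd, hsh⟩
      -- σ lies in the closure of the left elements
      have hmul : ∀ t ∈ AddSubmonoid.closure ((fun x => x / ω) '' leftEls Λ),
          ω * t ∈ AddSubmonoid.closure (leftEls Λ) := by
        intro t ht
        induction ht using AddSubmonoid.closure_induction with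
        | mem y hy =>
          obtain ⟨x, hx, rfl⟩ := hy
          obtain ⟨w, rfl⟩ := hωdvd x hx
          simp only []
          rw [Nat.mul_div_cancel_left _ hω0]
          exact AddSubmonoid.subset_closure hx
        | zero => simpa using AddSubmonoid.zero_mem _
        | add y z _ _ hy hz =>
          rw [Nat.mul_add]
          exact AddSubmonoid.add_mem _ hy hz
      have hσcl : σ ∈ AddSubmonoid.closure (leftEls Λ) := by
        obtain ⟨t, rfl⟩ := hdvd
        have htdiv : ω * t / ω = t := Nat.mul_div_cancel_left _ hω0
        have ht : t ∈ AddSubmonoid.closure ((fun x => x / ω) '' leftEls Λ) := by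
          have h' : ω * t / ω ∈ AddSubmonoid.closure ((fun x => x / ω) '' leftEls Λ) := hsh
          rwa [htdiv] at h'
        exact hmul t ht
      -- elements of that closure beyond F decompose
      have hP : ∀ x ∈ AddSubmonoid.closure (leftEls Λ),
          x ∈ Λ ∧ (0 < x → x < F ∨ ∃ a b : ℕ, 0 < a ∧ 0 < b ∧ a ∈ Λ ∧ b ∈ Λ ∧ a + b = x) := by
        intro x hx
        induction hx using AddSubmonoid.closure_induction with
        | mem y hy => exact ⟨hy.1, fun _ => Or.inl hy.2⟩
        | zero => exact ⟨h.zero_mem, by omega⟩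
        | add y z _ _ hy hz =>
          refine ⟨h.add_mem hy.1 hz.1, ?_⟩
          intro hpos
          rcases Nat.eq_zero_or_pos y with hy0 | hy0
          · subst hy0
            simpa using hz.2 (by omega)
          rcases Nat.eq_zero_or_pos z with hz0 | hz0
          · subst hz0
            simpa using hy.2 (by omega)
          exact Or.inr ⟨y, z, hy0, hz0, hy.1, hz.1, rfl⟩
      rcases (hP σ hσcl).2 hσ0 with hlt | hdec
      · omega
      · exact hdec
  rw [key]
  tauto

end NumSgpPaper
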